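/- Block encoding of the central first-order difference operator: let U = (H ⊗ I_N) · (P₁ ⊗ S₊ + P₀ ⊗ I_N) · (P₀ ⊗ S₋ + P₁ ⊗ I_N) · (Z ⊗ I_N) · (H ⊗ I_N), a 2N×2N matrix indexed by Fin 2 × Fin N. Then for all j, k ∈ Fin N, U((0,j),(0,k)) = (D̃₁)_{jk}, where D̃₁ = (1/2)(S₋ − S₊) = h·D₁ with D₁ = (1/(2h))(S₋ − S₊) the central finite-difference approximation of d/dx with periodic boundary conditions. -/
import Mathlib


open Matrix Kronecker

noncomputable section

/-- Cyclic shift matrix `S₊`: `(S₊)_{jk} = 1` iff `j ≡ k+1 (mod N)`. -/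
def Sp (N : ℕ) [NeZero N] : Matrix (Fin N) (Fin N) ℂ :=
  Matrix.of fun j k => if j = k + 1 then 1 else 0

/-- Cyclic shift matrix `S₋ = S₊ᵀ`. -/
def Sm (N : ℕ) [NeZero N] : Matrix (Fin N) (Fin N) ℂ := (Sp N)ᵀ

def P0 : Matrix (Fin 2) (Fin 2) ℂ := !![1, 0; 0, 0]
def P1 : Matrix (Fin 2) (Fin 2) ℂ := !![0, 0; 0, 1]
def Hg : Matrix (Fin 2) (Fin 2) ℂ := ((Real.sqrt 2 : ℝ) : ℂ)⁻¹ • !![1, 1; 1, -1]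
def Zg : Matrix (Fin 2) (Fin 2) ℂ := !![1, 0; 0, -1]

/-- `D̃₁ = (1/2)(S₋ − S₊) = h·D₁`, the scaled central finite-difference approximation
of `d/dx` with periodic boundary conditions. -/
def Dt1 (N : ℕ) [NeZero N] : Matrix (Fin N) (Fin N) ℂ :=
  (1 / 2 : ℂ) • (Sm N - Sp N)

lemma h2c : ((Real.sqrt 2 : ℝ) : ℂ)⁻¹ * ((Real.sqrt 2 : ℝ) : ℂ)⁻¹ = 1 / 2 := by
  rw [← Complex.ofReal_inv, ← Complex.ofReal_mul, ← Real.sqrt_inv, Real.mul_self_sqrt (by norm_num)]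
  norm_num

lemma P10 : P1 * P0 = 0 := by
  ext i j; fin_cases i <;> fin_cases j <;> simp [P0, P1, Matrix.mul_apply, Fin.sum_univ_two]

lemma P10' (X : Matrix (Fin 2) (Fin 2) ℂ) : P1 * (P0 * X) = 0 := by
  rw [← mul_assoc, P10, Matrix.zero_mul]

lemma P01 : P0 * P1 = 0 := by
  ext i j; fin_cases i <;> fin_cases j <;> simp [P0, P1, Matrix.mul_apply, Fin.sum_univ_two]

lemma P01' (X : Matrix (Fin 2) (Fin 2) ℂ) : P0 * (P1 * X) = 0 := by
  rw [← mul_assoc, P01, Matrix.zero_mul]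

lemma P00 : P0 * P0 = P0 := by
  ext i j; fin_cases i <;> fin_cases j <;> simp [P0, Matrix.mul_apply, Fin.sum_univ_two]

lemma P00' (X : Matrix (Fin 2) (Fin 2) ℂ) : P0 * (P0 * X) = P0 * X := by
  rw [← mul_assoc, P00]

lemma P11 : P1 * P1 = P1 := by
  ext i j; fin_cases i <;> fin_cases j <;> simp [P1, Matrix.mul_apply, Fin.sum_univ_two]

lemma P11' (X : Matrix (Fin 2) (Fin 2) ℂ) : P1 * (P1 * X) = P1 * X := by
  rw [← mul_assoc, P11]

theorem stmt_13 (n : ℕ) (hn : 1 ≤ n) (N : ℕ) (hN : N = 2 ^ n) [NeZero N]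
    (U : Matrix (Fin 2 × Fin N) (Fin 2 × Fin N) ℂ)
    (hU : U = (Hg ⊗ₖ (1 : Matrix (Fin N) (Fin N) ℂ))
      * (P1 ⊗ₖ Sp N + P0 ⊗ₖ (1 : Matrix (Fin N) (Fin N) ℂ))
      * (P0 ⊗ₖ Sm N + P1 ⊗ₖ (1 : Matrix (Fin N) (Fin N) ℂ))
      * (Zg ⊗ₖ (1 : Matrix (Fin N) (Fin N) ℂ))
      * (Hg ⊗ₖ (1 : Matrix (Fin N) (Fin N) ℂ))) :
    ∀ j k : Fin N, U (0, j) (0, k) = Dt1 N j k := by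
  intro j k
  have key : U = (Hg * (P1 * (Zg * Hg))) ⊗ₖ Sp N + (Hg * (P0 * (Zg * Hg))) ⊗ₖ Sm N := by
    rw [hU]
    simp only [Matrix.mul_add, Matrix.add_mul, ← Matrix.mul_kronecker_mul, mul_assoc,
      P10', P01', P00', P11', Matrix.zero_kronecker, Matrix.mul_one, Matrix.one_mul,
      Matrix.mul_zero, Matrix.zero_mul, add_zero, zero_add, mul_zero, zero_mul]
    exact add_comm _ _
  have hA : (Hg * (P1 * (Zg * Hg))) 0 0 = -(1/2 : ℂ) := by
    simp [Hg, P1, Zg, Matrix.mul_apply, Fin.sum_univ_two]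
    ring_nf
    rw [sq]; exact h2c
  have hB : (Hg * (P0 * (Zg * Hg))) 0 0 = (1/2 : ℂ) := by
    simp [Hg, P0, Zg, Matrix.mul_apply, Fin.sum_univ_two]
    ring_nf
    rw [sq]; exact h2c
  rw [key]
  simp only [Matrix.add_apply, Matrix.kroneckerMap_apply, hA, hB, Dt1, Matrix.smul_apply,
    Matrix.sub_apply, smul_eq_mul]
  ring
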